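/- Gap characterization for DeqEmpty: a differentiated queue history h has a projection h' whose 'last' rule is R_DeqEmpty and which is not linearizable with respect to the matching set of R_DeqEmpty, if and only if there exists a DeqEmpty operation o in h such that there is no gap on o. -/

import Mathlib

attribute [local instance] Classical.propDecidable

/-- Operations of a queue history: enqueues and dequeues of data values
(natural numbers), and empty-dequeues (tagged by an identifier). -/
inductive QOp : Type
  | enq (d : ℕ)
  | deq (d : ℕ)
  | deqEmpty (i : ℕ)
deriving DecidableEq

/-- A differentiated queue history: a finite set of operations (each operation
occurs at most once, so each data value is used at most once) together with a
happens-before relation that is a strict interval order. -/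
structure QHistory where
  ops : Finset QOp
  hb : QOp → QOp → Prop
  hb_irrefl : ∀ o, ¬ hb o o
  hb_trans : ∀ a b c, hb a b → hb b c → hb a c
  interval : ∀ a b c d, hb a b → hb c d → hb a d ∨ hb c b

/-- `u` is a linearization of the history `h`: it enumerates exactly the
operations of `h` in an order extending happens-before. -/
def QHistory.Linearizes (h : QHistory) (u : List QOp) : Prop :=
  u.Nodup ∧ (∀ o, o ∈ u ↔ o ∈ h.ops) ∧ u.Pairwise (fun a b => ¬ h.hb b a)

/-- `h` is linearizable with respect to the set of sequential words `M`. -/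
def LinearizableSet (h : QHistory) (M : List QOp → Prop) : Prop :=
  ∃ u, M u ∧ h.Linearizes u

def noDeq (u : List QOp) : Prop := ∀ d, QOp.deq d ∉ u

def noUnmatchedEnq (u : List QOp) : Prop := ∀ d, QOp.enq d ∈ u → QOp.deq d ∈ u

/-- Matching set of the rule R_EnqDeq with witness `x`:
words `Enq(x) · u1 · Deq(x) · u2` where `u1` contains no dequeue. -/
def MatchEnqDeqW (x : ℕ) (w : List QOp) : Prop :=
  ∃ u1 u2, w = QOp.enq x :: u1 ++ QOp.deq x :: u2 ∧ noDeq u1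

/-- Matching set of R_EnqDeq (some witness). -/
def MatchEnqDeq (w : List QOp) : Prop := ∃ x, MatchEnqDeqW x w

/-- Data values occurring in a history. -/
def QHistory.dom (h : QHistory) : Set ℕ :=
  {d | QOp.enq d ∈ h.ops ∨ QOp.deq d ∈ h.ops}

def QOp.keep (D K : Set ℕ) : QOp → Prop
  | .enq d => d ∈ D
  | .deq d => d ∈ D
  | .deqEmpty i => i ∈ K

/-- Projection of a history onto the data values in `D`, keeping the
empty-dequeue operations with identifiers in `K`. -/
noncomputable def QHistory.proj (h : QHistory) (D K : Set ℕ) : QHistory :=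
  { h with ops := h.ops.filter (QOp.keep D K) }

/-- Remove all operations on the data value `x`. -/
noncomputable def QHistory.removeVal (h : QHistory) (x : ℕ) : QHistory :=
  { h with ops := h.ops.filter (fun o => o ≠ QOp.enq x ∧ o ≠ QOp.deq x) }

/-- Data values occurring in a sequential word. -/
def wordVals (u : List QOp) : Set ℕ := {d | QOp.enq d ∈ u ∨ QOp.deq d ∈ u}

/-- `h` has a gap on operation `o`: the other operations can be partitioned
into `L ⊎ R` where `L` has no unmatched enqueue, no operation of `R`
happens-before an operation of `L` or before `o`, and no operation of `L`
happens-after `o`. -/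
def Gap (h : QHistory) (o : QOp) : Prop :=
  ∃ L R : Finset QOp,
    L ∪ R = h.ops.erase o ∧ Disjoint L R ∧
    (∀ d, QOp.enq d ∈ L → QOp.deq d ∈ L) ∧
    (∀ a ∈ R, ∀ b ∈ L, ¬ h.hb a b) ∧
    (∀ a ∈ R, ¬ h.hb a o) ∧
    (∀ b ∈ L, ¬ h.hb o b)

/-- Matching set of R_DeqEmpty: words `u · DeqEmpty · v` where `u` has no
unmatched enqueue. -/
def MatchDeqEmpty (w : List QOp) : Prop :=
  ∃ u i v, w = u ++ QOp.deqEmpty i :: v ∧ noUnmatchedEnq u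

/-- `last(h') = R_DeqEmpty`: the history contains an empty dequeue. -/
def lastDeqEmpty (h : QHistory) : Prop := ∃ i, QOp.deqEmpty i ∈ h.ops

/-- The operation `o` is covered by the values `f 0, ..., f (Fin.last m)`
(equivalently, the left-right constraint graph of `o` has a cycle through `o`):
`Enq(f 0)` happens-before `o`, each `Enq(f (i+1))` happens-before
`Deq(f i)`, and `o` happens-before `Deq(f m)` or `Deq(f m)` is absent. -/
def Covered (h : QHistory) (o : QOp) : Prop :=
  ∃ m : ℕ, ∃ f : Fin (m + 1) → ℕ,
    (∀ i, f i ∈ h.dom) ∧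
    h.hb (QOp.enq (f 0)) o ∧
    (∀ i : Fin m, h.hb (QOp.enq (f i.succ)) (QOp.deq (f i.castSucc))) ∧
    (h.hb o (QOp.deq (f (Fin.last m))) ∨ QOp.deq (f (Fin.last m)) ∉ h.ops)

/-- Every nonempty finite set of operations has an hb-maximal element. -/
private lemma exists_hb_max (h : QHistory) :
    ∀ n (s : Finset QOp), s.card ≤ n → s.Nonempty → ∃ m ∈ s, ∀ x ∈ s, ¬ h.hb m x := by
  intro n
  induction n with
  | zero =>
    intro s hc hne
    exact absurd (Finset.card_eq_zero.mp (Nat.le_zero.mp hc))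
      (Finset.nonempty_iff_ne_empty.mp hne)
  | succ n ih =>
    intro s hc hne
    obtain ⟨a, ha⟩ := hne
    by_cases hmax : ∀ x ∈ s, ¬ h.hb a x
    · exact ⟨a, ha, hmax⟩
    · push_neg at hmax
      obtain ⟨x0, hx0, hax0⟩ := hmax
      set t := s.filter (fun x => h.hb a x) with ht
      have htne : t.Nonempty := ⟨x0, Finset.mem_filter.mpr ⟨hx0, hax0⟩⟩
      have hats : a ∉ t := fun hat => h.hb_irrefl a (Finset.mem_filter.mp hat).2
      have htsub : t ⊆ s := Finset.filter_subset _ _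
      have htcard : t.card ≤ n := by
        have : t.card < s.card :=
          Finset.card_lt_card ⟨htsub, fun hsub => hats (hsub ha)⟩
        omega
      obtain ⟨m, hmt, hmmax⟩ := ih t htcard htne
      refine ⟨m, htsub hmt, fun x hx hbmx => ?_⟩
      have ham : h.hb a m := (Finset.mem_filter.mp hmt).2
      exact hmmax x (Finset.mem_filter.mpr ⟨hx, h.hb_trans _ _ _ ham hbmx⟩) hbmx

/-- Topological sort of a finite set of operations along hb. -/
private lemma exists_topo (h : QHistory) :
    ∀ n (s : Finset QOp), s.card ≤ n →
      ∃ l : List QOp, l.Nodup ∧ (∀ o, o ∈ l ↔ o ∈ s) ∧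
        l.Pairwise (fun a b => ¬ h.hb b a) := by
  intro n
  induction n with
  | zero =>
    intro s hc
    have hs : s = ∅ := Finset.card_eq_zero.mp (Nat.le_zero.mp hc)
    exact ⟨[], by simp [hs]⟩
  | succ n ih =>
    intro s hc
    rcases s.eq_empty_or_nonempty with rfl | hne
    · exact ⟨[], by simp⟩
    obtain ⟨m, hm, hmmax⟩ := exists_hb_max h s.card s le_rfl hne
    have hcard : (s.erase m).card ≤ n := by
      have := Finset.card_erase_of_mem hm
      have := Finset.card_pos.mpr hne
      omega
    obtain ⟨l, hnd, hmem, hpw⟩ := ih (s.erase m) hcard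
    refine ⟨l ++ [m], ?_, ?_, ?_⟩
    · rw [List.nodup_append]
      refine ⟨hnd, List.nodup_singleton m, ?_⟩
      intro a ha b hb hab
      simp only [List.mem_singleton] at hb
      rw [hab, hb] at ha
      exact (Finset.notMem_erase m s) ((hmem m).mp ha)
    · intro o
      simp only [List.mem_append, List.mem_singleton, hmem o, Finset.mem_erase]
      constructor
      · rintro (⟨_, h1⟩ | rfl)
        · exact h1
        · exact hm
      · intro hos
        by_cases h1 : o = m
        · exact Or.inr h1
        · exact Or.inl ⟨h1, hos⟩
    · rw [List.pairwise_append]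
      refine ⟨hpw, List.pairwise_singleton _ _, ?_⟩
      intro a ha b hb
      simp only [List.mem_singleton] at hb
      subst hb
      exact hmmax a (Finset.mem_erase.mp ((hmem a).mp ha)).2

/-- gap characterization: a differentiated queue history `h` has
a projection `h'` with `last(h') = R_DeqEmpty` that is not linearizable with
respect to the matching set of R_DeqEmpty iff some `DeqEmpty` operation of `h`
has no gap on it. -/
theorem deqEmpty_gap_characterization (h : QHistory) :
    (∃ D K : Set ℕ, D ⊆ h.dom ∧ lastDeqEmpty (h.proj D K) ∧
        ¬ LinearizableSet (h.proj D K) MatchDeqEmpty) ↔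
    (∃ i, QOp.deqEmpty i ∈ h.ops ∧ ¬ Gap h (QOp.deqEmpty i)) := by
  constructor
  · -- forward: not-linearizable projection ⟹ some DeqEmpty has no gap
    rintro ⟨D, K, hD, ⟨i, hi⟩, hnl⟩
    by_contra hng
    simp only [not_exists, not_and, not_not] at hng
    apply hnl
    -- notation
    have hiops : QOp.deqEmpty i ∈ h.ops := (Finset.mem_filter.mp hi).1
    obtain ⟨L, R, hu, hdisj, hmatch, hRL, hRo, hoL⟩ := hng i hiops
    set o : QOp := QOp.deqEmpty i with ho
    set H : Finset QOp := (h.proj D K).ops with hH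
    have hHsub : H ⊆ h.ops := Finset.filter_subset _ _
    set L' : Finset QOp := L ∩ H with hL'
    set R' : Finset QOp := R ∩ H with hR'
    obtain ⟨lL, ndL, memL, pwL⟩ := exists_topo h L'.card L' le_rfl
    obtain ⟨lR, ndR, memR, pwR⟩ := exists_topo h R'.card R' le_rfl
    have hLsub : L ⊆ h.ops.erase o := hu ▸ Finset.subset_union_left
    have hRsub : R ⊆ h.ops.erase o := hu ▸ Finset.subset_union_right
    have hoL' : o ∉ L := fun hx => Finset.notMem_erase o h.ops (hLsub hx)
    have hoR' : o ∉ R := fun hx => Finset.notMem_erase o h.ops (hRsub hx)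
    refine ⟨lL ++ o :: lR, ⟨lL, i, lR, rfl, ?_⟩, ?_, ?_, ?_⟩
    · -- noUnmatchedEnq lL
      intro d hd
      have hdL' : QOp.enq d ∈ L' := (memL _).mp hd
      have hdL : QOp.enq d ∈ L := (Finset.mem_inter.mp hdL').1
      have hdH : QOp.enq d ∈ H := (Finset.mem_inter.mp hdL').2
      have hdD : d ∈ D := (Finset.mem_filter.mp hdH).2
      have hqL : QOp.deq d ∈ L := hmatch d hdL
      have hqH : QOp.deq d ∈ H :=
        Finset.mem_filter.mpr ⟨Finset.mem_of_mem_erase (hLsub hqL), hdD⟩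
      exact (memL _).mpr (Finset.mem_inter.mpr ⟨hqL, hqH⟩)
    · -- Nodup
      rw [List.nodup_append]
      refine ⟨ndL, ?_, ?_⟩
      · rw [List.nodup_cons]
        refine ⟨fun hx => ?_, ndR⟩
        exact hoR' (Finset.mem_inter.mp ((memR _).mp hx)).1
      · intro a ha b hb hab
        rw [← hab] at hb
        have haL : a ∈ L := (Finset.mem_inter.mp ((memL _).mp ha)).1
        rcases List.mem_cons.mp hb with rfl | hb
        · exact hoL' haL
        · have haR : a ∈ R := (Finset.mem_inter.mp ((memR _).mp hb)).1
          exact Finset.disjoint_left.mp hdisj haL haR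
    · -- membership
      intro x
      simp only [List.mem_append, List.mem_cons, memL x, memR x]
      constructor
      · rintro (hx | rfl | hx)
        · exact (Finset.mem_inter.mp hx).2
        · exact hi
        · exact (Finset.mem_inter.mp hx).2
      · intro hx
        by_cases hxo : x = o
        · exact Or.inr (Or.inl hxo)
        · have hx' : x ∈ h.ops.erase o := Finset.mem_erase.mpr ⟨hxo, hHsub hx⟩
          rw [← hu] at hx'
          rcases Finset.mem_union.mp hx' with hxl | hxr
          · exact Or.inl (Finset.mem_inter.mpr ⟨hxl, hx⟩)
          · exact Or.inr (Or.inr (Finset.mem_inter.mpr ⟨hxr, hx⟩))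
    · -- pairwise
      rw [List.pairwise_append]
      refine ⟨pwL, ?_, ?_⟩
      · rw [List.pairwise_cons]
        refine ⟨fun b hb => ?_, pwR⟩
        exact hRo b (Finset.mem_inter.mp ((memR _).mp hb)).1
      · intro a ha b hb
        have haL : a ∈ L := (Finset.mem_inter.mp ((memL _).mp ha)).1
        rcases List.mem_cons.mp hb with rfl | hb
        · exact hoL a haL
        · exact hRL b (Finset.mem_inter.mp ((memR _).mp hb)).1 a haL
  · -- backward: DeqEmpty with no gap ⟹ non-linearizable projection
    rintro ⟨i, hi, hng⟩
    have hkeep : QOp.keep h.dom {i} (QOp.deqEmpty i) := Set.mem_singleton i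
    refine ⟨h.dom, {i}, le_refl _, ⟨i, Finset.mem_filter.mpr ⟨hi, hkeep⟩⟩, ?_⟩
    rintro ⟨w, ⟨u1, j, v, rfl, hnue⟩, hnd, hmem, hpw⟩
    set H : Finset QOp := (h.proj h.dom {i}).ops with hH
    have hHsub' : H ⊆ h.ops := Finset.filter_subset _ _
    -- j = i
    have hjH : QOp.deqEmpty j ∈ H := (hmem _).mp (by simp)
    have hji : j = i := (Finset.mem_filter.mp hjH).2
    subst hji
    set o : QOp := QOp.deqEmpty j with ho
    have hoH : o ∈ H := hjH
    -- structural facts from the linearization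
    rw [List.nodup_append] at hnd
    obtain ⟨ndu1, ndov, hdisj12⟩ := hnd
    rw [List.nodup_cons] at ndov
    have hou1 : o ∉ u1 := fun hx => hdisj12 o hx o List.mem_cons_self rfl
    have hov : o ∉ v := ndov.1
    rw [List.pairwise_append] at hpw
    obtain ⟨pw1, pwov, hcross⟩ := hpw
    rw [List.pairwise_cons] at pwov
    obtain ⟨pwo, pwv⟩ := pwov
    -- members of the word are in H
    have hmem1 : ∀ x ∈ u1, x ∈ H := fun x hx => (hmem x).mp (by simp [hx])
    have hmemv : ∀ x ∈ v, x ∈ H := fun x hx => (hmem x).mp (by simp [hx])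
    -- build a gap, contradiction
    apply hng
    classical
    set L0 : Finset QOp := H.filter (· ∈ u1) with hL0
    set R0 : Finset QOp := H.filter (· ∈ v) with hR0
    set Ms : Finset QOp := h.ops \ H with hMs
    set P : QOp → Prop := fun a => ¬ h.hb o a ∧ ∀ r ∈ R0, ¬ h.hb r a with hP
    set L1 : Finset QOp := Ms.filter P with hL1
    set R1 : Finset QOp := Ms.filter (fun a => ¬ P a) with hR1
    have hL0mem : ∀ x, x ∈ L0 ↔ x ∈ u1 := by
      intro x
      simp only [hL0, Finset.mem_filter]
      exact ⟨fun hx => hx.2, fun hx => ⟨hmem1 x hx, hx⟩⟩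
    have hR0mem : ∀ x, x ∈ R0 ↔ x ∈ v := by
      intro x
      simp only [hR0, Finset.mem_filter]
      exact ⟨fun hx => hx.2, fun hx => ⟨hmemv x hx, hx⟩⟩
    -- consequences of ¬ P
    have hnotP : ∀ a, ¬ P a → h.hb o a ∨ ∃ r ∈ R0, h.hb r a := by
      intro a hPa
      by_contra hc
      push_neg at hc
      exact hPa ⟨hc.1, hc.2⟩
    refine ⟨L0 ∪ L1, R0 ∪ R1, ?_, ?_, ?_, ?_, ?_, ?_⟩
    · -- union
      ext x
      simp only [Finset.mem_union, Finset.mem_erase, hL0mem, hR0mem, hL1, hR1,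
        Finset.mem_filter, hMs, Finset.mem_sdiff]
      constructor
      · rintro ((hx | hx) | (hx | hx))
        · exact ⟨fun he => hou1 (he ▸ hx), hHsub' (hmem1 x hx)⟩
        · exact ⟨fun he => hx.1.2 (he ▸ hoH), hx.1.1⟩
        · exact ⟨fun he => hov (he ▸ hx), hHsub' (hmemv x hx)⟩
        · exact ⟨fun he => hx.1.2 (he ▸ hoH), hx.1.1⟩
      · rintro ⟨hxo, hxops⟩
        by_cases hxH : x ∈ H
        · have : x ∈ u1 ++ o :: v := (hmem x).mpr hxH
          simp only [List.mem_append, List.mem_cons] at this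
          rcases this with h1 | h1 | h1
          · exact Or.inl (Or.inl h1)
          · exact absurd h1 hxo
          · exact Or.inr (Or.inl h1)
        · by_cases hPx : P x
          · exact Or.inl (Or.inr ⟨⟨hxops, hxH⟩, hPx⟩)
          · exact Or.inr (Or.inr ⟨⟨hxops, hxH⟩, hPx⟩)
    · -- disjoint
      rw [Finset.disjoint_left]
      rintro a ha hb
      rcases Finset.mem_union.mp ha with ha | ha <;>
        rcases Finset.mem_union.mp hb with hb | hb
      · -- L0 vs R0 : a in u1 and in v, contradicting nodup
        exact hdisj12 a ((hL0mem a).mp ha) a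
          (List.mem_cons.mpr (Or.inr ((hR0mem a).mp hb))) rfl
      · -- L0 vs R1
        exact (Finset.mem_sdiff.mp (Finset.mem_filter.mp hb).1).2 (Finset.mem_filter.mp ha).1
      · -- L1 vs R0
        exact (Finset.mem_sdiff.mp (Finset.mem_filter.mp ha).1).2 (Finset.mem_filter.mp hb).1
      · -- L1 vs R1
        exact (Finset.mem_filter.mp hb).2 (Finset.mem_filter.mp ha).2
    · -- no unmatched enqueue in L
      intro d hd
      rcases Finset.mem_union.mp hd with hd | hd
      · have hd1 : QOp.enq d ∈ u1 := (hL0mem _).mp hd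
        have hq1 : QOp.deq d ∈ u1 := hnue d hd1
        exact Finset.mem_union_left _ ((hL0mem _).mpr hq1)
      · -- enq d cannot be missing from the projection
        exfalso
        have hdm : QOp.enq d ∈ Ms := (Finset.mem_filter.mp hd).1
        obtain ⟨hdo, hdH⟩ := Finset.mem_sdiff.mp hdm
        exact hdH (Finset.mem_filter.mpr ⟨hdo, Or.inl hdo⟩)
    · -- R does not happen-before L
      intro a ha b hb hab
      rcases Finset.mem_union.mp ha with ha | ha <;>
        rcases Finset.mem_union.mp hb with hb | hb
      · exact hcross b ((hL0mem b).mp hb) a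
          (List.mem_cons.mpr (Or.inr ((hR0mem a).mp ha))) hab
      · exact ((Finset.mem_filter.mp hb).2 : P b).2 a ha hab
      · rcases hnotP a (Finset.mem_filter.mp ha).2 with h1 | ⟨r, hr, h1⟩
        · exact hcross b ((hL0mem b).mp hb) o (List.mem_cons.mpr (Or.inl rfl))
            (h.hb_trans _ _ _ h1 hab)
        · exact hcross b ((hL0mem b).mp hb) r
            (List.mem_cons.mpr (Or.inr ((hR0mem r).mp hr)))
            (h.hb_trans _ _ _ h1 hab)
      · rcases hnotP a (Finset.mem_filter.mp ha).2 with h1 | ⟨r, hr, h1⟩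
        · exact ((Finset.mem_filter.mp hb).2 : P b).1 (h.hb_trans _ _ _ h1 hab)
        · exact ((Finset.mem_filter.mp hb).2 : P b).2 r hr (h.hb_trans _ _ _ h1 hab)
    · -- R does not happen-before o
      intro a ha hao
      rcases Finset.mem_union.mp ha with ha | ha
      · exact pwo a ((hR0mem a).mp ha) hao
      · rcases hnotP a (Finset.mem_filter.mp ha).2 with h1 | ⟨r, hr, h1⟩
        · exact h.hb_irrefl o (h.hb_trans _ _ _ h1 hao)
        · exact pwo r ((hR0mem r).mp hr) (h.hb_trans _ _ _ h1 hao)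
    · -- o does not happen-before L
      intro b hb hob
      rcases Finset.mem_union.mp hb with hb | hb
      · exact hcross b ((hL0mem b).mp hb) o (List.mem_cons.mpr (Or.inl rfl)) hob
      · exact ((Finset.mem_filter.mp hb).2 : P b).1 hob
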